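/- Let Λ be a symmetric m×m matrix over a commutative ring whose rows each sum to zero. Then all entries of the adjugate matrix adj(Λ) are equal. -/
import Mathlib

lemma det_eq_zero_of_rowsum_zero {R : Type*} [CommRing R] {m : ℕ}
    (A : Matrix (Fin m) (Fin m) R) (hrow : ∀ i, ∑ j, A i j = 0) (i₀ : Fin m) :
    A.det = 0 := by
  have h1 : A.mulVec (fun _ => (1:R)) = 0 := by
    funext i
    simpa [Matrix.mulVec, dotProduct] using hrow i
  have h2 := congrArg (fun M => M.mulVec (fun _ => (1:R))) (Matrix.adjugate_mul A)
  simp only [← Matrix.mulVec_mulVec, h1, Matrix.mulVec_zero, Matrix.smul_mulVec,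
    Matrix.one_mulVec] at h2
  have := congrFun h2.symm i₀
  simpa using this

lemma adj_col_const {R : Type*} [CommRing R] {m : ℕ}
    (A : Matrix (Fin m) (Fin m) R) (hrow : ∀ i, ∑ j, A i j = 0) (i i' j : Fin m) :
    A.adjugate i j = A.adjugate i' j := by
  have key : (A.updateRow j ((Pi.single i (1:R) - Pi.single i' 1))).det = 0 := by
    apply det_eq_zero_of_rowsum_zero _ _ j
    intro r
    rcases eq_or_ne r j with rfl | hr
    · simp [Finset.sum_sub_distrib]
    · simp [Matrix.updateRow_ne hr, hrow r]
  have hadd : (A.updateRow j (((Pi.single i (1:R) - Pi.single i' 1) + Pi.single i' 1))).det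
      = (A.updateRow j ((Pi.single i (1:R) - Pi.single i' 1))).det
        + (A.updateRow j (Pi.single i' 1)).det := Matrix.det_updateRow_add A j _ _
  rw [Matrix.adjugate_apply, Matrix.adjugate_apply]
  have : ((Pi.single i 1 - Pi.single i' 1 : Fin m → R)) + Pi.single i' 1 = Pi.single i 1 := by
    abel
  rw [this] at hadd
  rw [hadd, key, zero_add]

/-- For a symmetric `m × m` matrix `Λ` over a commutative ring whose rows each
sum to zero, all entries of the adjugate matrix `adj(Λ)` are equal. -/
theorem adjugate_entries_eq_of_symm_rowsum_zero {R : Type*} [CommRing R] {m : ℕ}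
    (Λ : Matrix (Fin m) (Fin m) R)
    (hsymm : Λ.transpose = Λ)
    (hrow : ∀ i, ∑ j, Λ i j = 0)
    (i j k l : Fin m) :
    Λ.adjugate i j = Λ.adjugate k l := by
  have hadjsymm : ∀ a b, Λ.adjugate a b = Λ.adjugate b a := by
    intro a b
    have := Matrix.adjugate_transpose Λ
    rw [hsymm] at this
    exact (congrFun (congrFun this b) a).symm ▸ (congrFun (congrFun this.symm b) a)
  calc Λ.adjugate i j = Λ.adjugate k j := adj_col_const Λ hrow i k j
    _ = Λ.adjugate j k := hadjsymm k j
    _ = Λ.adjugate l k := adj_col_const Λ hrow j l k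
    _ = Λ.adjugate k l := hadjsymm l k
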